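/- arXiv:2605.30929 — 2 statements merged into one kernel-verified Lean document; each statement's English description precedes it below -/
import Mathlib

section
/- Let k ≥ 1. For C = (c_{ij}) ∈ M_{k×k}(L) write h(C) = τ_k·σ(C) − C·τ_k, and define S = {C ∈ M_{k×k}(L) : h(C)_{k,1} ∈ t𝒪_L and h(C)_{ij} ∈ 𝒪_L for all (i,j)}. Then S is an additive subgroup of M_{k×k}(L) containing M_{k×k}(𝒪_L), and there is a bijection of sets between the quotient group S / M_{k×k}(𝒪_L) and the product (t^{−1}𝒪_L/𝒪_L)^{k−1} × (𝔽_{p^k}((t)) / 𝔽_{p^k}[[t]])^k, where 𝔽_{p^k} = {a ∈ κ̄ : a^{p^k} = a}. -/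
noncomputable section

/-- `κ̄`: an algebraic closure of `𝔽_p`. -/
abbrev Kb (p : ℕ) [Fact p.Prime] := AlgebraicClosure (ZMod p)

/-- `L = κ̄((t))`: formal Laurent series over `κ̄`. -/
abbrev Lp (p : ℕ) [Fact p.Prime] := LaurentSeries (Kb p)

/-- `σ`: the coefficientwise Frobenius `σ(Σ aᵢ tⁱ) = Σ aᵢ^p tⁱ` on `L = κ̄((t))`. -/
def frob (p : ℕ) [Fact p.Prime] (c : Lp p) : Lp p where
  coeff := fun i => (c.coeff i) ^ p
  isPWO_support' := Set.IsPWO.mono c.isPWO_support' (by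
    intro i hi
    simp only [Function.mem_support] at hi ⊢
    intro h
    exact hi (by rw [h]; exact zero_pow (Fact.out : p.Prime).ne_zero))

/-- The uniformizer `t` of `κ̄((t))`. -/
def tt (p : ℕ) [Fact p.Prime] : Lp p := HahnSeries.single (1 : ℤ) (1 : Kb p)

/-- The valuation ring `𝒪_L = κ̄[[t]]` as an additive subgroup of `L = κ̄((t))`. -/
def OL (p : ℕ) [Fact p.Prime] : AddSubgroup (Lp p) where
  carrier := {c | ∀ i : ℤ, i < 0 → c.coeff i = 0}
  add_mem' := by
    intro a b ha hb i hi
    simp [ha i hi, hb i hi]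
  zero_mem' := by intro i hi; simp
  neg_mem' := by intro a ha i hi; simp [ha i hi]

/-- `M_{k×k}(𝒪_L)` as an additive subgroup of `M_{k×k}(L)`. -/
def MO (p : ℕ) [Fact p.Prime] (k : ℕ) : AddSubgroup (Matrix (Fin k) (Fin k) (Lp p)) where
  carrier := {C | ∀ i j, C i j ∈ OL p}
  add_mem' := by
    intro a b ha hb i j
    exact add_mem (ha i j) (hb i j)
  zero_mem' := by intro i j; exact zero_mem _
  neg_mem' := by intro a ha i j; exact neg_mem (ha i j)

/-- The canonical superbasic element `τ_r`: the `r×r` matrix with `t` in position `(r,1)`,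
`1` on the superdiagonal, and `0` elsewhere (1-indexed); `τ_1 = (t)`. -/
def tau (p : ℕ) [Fact p.Prime] (r : ℕ) : Matrix (Fin r) (Fin r) (Lp p) :=
  Matrix.of fun i j =>
    if (i : ℕ) + 1 = (j : ℕ) then 1 else if (i : ℕ) = r - 1 ∧ (j : ℕ) = 0 then tt p else 0

namespace Stmt9Aux

variable (p : ℕ) [Fact p.Prime]

/-- iterated coefficientwise Frobenius -/
def sg (d : ℕ) (c : Lp p) : Lp p where
  coeff := fun i => (c.coeff i) ^ (p ^ d)
  isPWO_support' := Set.IsPWO.mono c.isPWO_support' (by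
    intro i hi
    simp only [Function.mem_support] at hi ⊢
    intro h
    exact hi (by rw [h]; exact zero_pow (pow_ne_zero d (Fact.out : p.Prime).ne_zero)))

@[simp] lemma sg_coeff (d : ℕ) (c : Lp p) (m : ℤ) :
    (sg p d c).coeff m = (c.coeff m) ^ (p ^ d) := rfl

@[simp] lemma frob_coeff (c : Lp p) (m : ℤ) : (frob p c).coeff m = (c.coeff m) ^ p := rfl

def Tinv (c : Lp p) : Lp p := HahnSeries.single (-1 : ℤ) 1 * c

@[simp] lemma Tinv_coeff (c : Lp p) (m : ℤ) : (Tinv p c).coeff m = c.coeff (m + 1) := by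
  have h : ((HahnSeries.single (-1 : ℤ) (1 : Kb p)) * c).coeff ((m + 1) + (-1)) =
      1 * c.coeff (m + 1) := HahnSeries.coeff_single_mul_add
  simpa [Tinv] using h

@[simp] lemma tt_mul_coeff (c : Lp p) (m : ℤ) : (tt p * c).coeff m = c.coeff (m - 1) := by
  have h : ((HahnSeries.single (1 : ℤ) (1 : Kb p)) * c).coeff ((m - 1) + 1) =
      1 * c.coeff (m - 1) := HahnSeries.coeff_single_mul_add
  simpa [tt] using h

@[simp] lemma mul_tt_coeff (c : Lp p) (m : ℤ) : (c * tt p).coeff m = c.coeff (m - 1) := by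
  have h : (c * (HahnSeries.single (1 : ℤ) (1 : Kb p))).coeff ((m - 1) + 1) =
      c.coeff (m - 1) * 1 := HahnSeries.coeff_mul_single_add
  simpa [tt] using h

def Pprin (c : Lp p) : Lp p where
  coeff := fun i => if i < 0 then c.coeff i else 0
  isPWO_support' := Set.IsPWO.mono c.isPWO_support' (by
    intro i hi
    simp only [Function.mem_support] at hi ⊢
    intro h
    apply hi
    rw [h]
    simp)

@[simp] lemma Pprin_coeff (c : Lp p) (m : ℤ) :
    (Pprin p c).coeff m = if m < 0 then c.coeff m else 0 := rfl

lemma mem_OL {c : Lp p} : c ∈ OL p ↔ ∀ i : ℤ, i < 0 → c.coeff i = 0 := Iff.rfl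

lemma frob_add (x y : Lp p) : frob p (x + y) = frob p x + frob p y := by
  ext m
  simp [HahnSeries.coeff_add, add_pow_char]

lemma frob_neg (x : Lp p) : frob p (-x) = -frob p x := by
  ext m
  simp only [frob_coeff, HahnSeries.coeff_neg]
  have h := sub_pow_char (R := Kb p) (x := (0 : Kb p)) (y := x.coeff m) (p := p)
  simp only [zero_sub, zero_pow (Fact.out : p.Prime).ne_zero] at h
  exact h

lemma fin_cast {k x y : ℕ} (hx : x < k) (hy : y < k) (h : x = y) :
    (⟨x, hx⟩ : Fin k) = ⟨y, hy⟩ := by subst h; rfl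



variable (k : ℕ)

lemma tau_mul_apply_lt (M : Matrix (Fin k) (Fin k) (Lp p)) (a : ℕ) (ha : a + 1 < k)
    (j : Fin k) :
    (tau p k * M) ⟨a, by omega⟩ j = M ⟨a + 1, ha⟩ j := by
  rw [Matrix.mul_apply]
  have hs : ∑ l, tau p k ⟨a, by omega⟩ l * M l j
      = tau p k ⟨a, by omega⟩ ⟨a + 1, ha⟩ * M ⟨a + 1, ha⟩ j := by
    refine Finset.sum_eq_single _ (fun l _ hl => ?_) (fun h => absurd (Finset.mem_univ _) h)
    have h1 : ¬ (a + 1 = (l : ℕ)) := fun hc => hl (by apply Fin.ext; simp [← hc])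
    have h2 : ¬ (a = k - 1) := by omega
    simp [tau, h1, h2]
  rw [hs]
  simp [tau]

lemma tau_mul_apply_last (M : Matrix (Fin k) (Fin k) (Lp p)) (hk : 0 < k) (j : Fin k) :
    (tau p k * M) ⟨k - 1, by omega⟩ j = tt p * M ⟨0, hk⟩ j := by
  rw [Matrix.mul_apply]
  have hs : ∑ l, tau p k ⟨k - 1, by omega⟩ l * M l j
      = tau p k ⟨k - 1, by omega⟩ ⟨0, hk⟩ * M ⟨0, hk⟩ j := by
    refine Finset.sum_eq_single _ (fun l _ hl => ?_) (fun h => absurd (Finset.mem_univ _) h)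
    have h0 : ¬ ((l : ℕ) = 0) := fun hc => hl (by apply Fin.ext; simp [hc])
    have h1 : ¬ (k - 1 + 1 = (l : ℕ)) := by have := l.isLt; omega
    simp [tau, h0, h1]
  rw [hs]
  have h1 : ¬ (k - 1 + 1 = (0 : ℕ)) := by omega
  simp [tau, h1]

lemma mul_tau_apply_pos (M : Matrix (Fin k) (Fin k) (Lp p)) (i : Fin k) (b : ℕ)
    (hb : b + 1 < k) :
    (M * tau p k) i ⟨b + 1, hb⟩ = M i ⟨b, by omega⟩ := by
  rw [Matrix.mul_apply]
  have hs : ∑ l, M i l * tau p k l ⟨b + 1, hb⟩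
      = M i ⟨b, by omega⟩ * tau p k ⟨b, by omega⟩ ⟨b + 1, hb⟩ := by
    refine Finset.sum_eq_single _ (fun l _ hl => ?_) (fun h => absurd (Finset.mem_univ _) h)
    have h1 : ¬ ((l : ℕ) + 1 = b + 1) := fun hc => hl (by apply Fin.ext; simpa using hc)
    have h2 : ¬ (b + 1 = 0) := by omega
    simp [tau, h1, h2, show ¬ ((l : ℕ) = b) by omega]
  rw [hs]
  simp [tau]

lemma mul_tau_apply_zero (M : Matrix (Fin k) (Fin k) (Lp p)) (hk : 0 < k) (i : Fin k) :
    (M * tau p k) i ⟨0, hk⟩ = M i ⟨k - 1, by omega⟩ * tt p := by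
  rw [Matrix.mul_apply]
  have hs : ∑ l, M i l * tau p k l ⟨0, hk⟩
      = M i ⟨k - 1, by omega⟩ * tau p k ⟨k - 1, by omega⟩ ⟨0, hk⟩ := by
    refine Finset.sum_eq_single _ (fun l _ hl => ?_) (fun h => absurd (Finset.mem_univ _) h)
    have h0 : ¬ ((l : ℕ) = k - 1) := fun hc => hl (by apply Fin.ext; simp [hc])
    have h1 : ¬ ((l : ℕ) + 1 = 0) := by omega
    simp [tau, h0, h1]
  rw [hs]
  have h1 : ¬ (k - 1 + 1 = 0) := by omega
  simp [tau, h1]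



variable {C : Matrix (Fin k) (Fin k) (Lp p)}

/-- entry of h(C) at (a, b+1), a+1 < k -/
lemma H1 (a b : ℕ) (ha : a + 1 < k) (hb : b + 1 < k) :
    (tau p k * C.map (frob p) - C * tau p k) ⟨a, by omega⟩ ⟨b + 1, hb⟩ =
      frob p (C ⟨a + 1, ha⟩ ⟨b + 1, hb⟩) - C ⟨a, by omega⟩ ⟨b, by omega⟩ := by
  rw [Matrix.sub_apply, tau_mul_apply_lt p k _ a ha, mul_tau_apply_pos, Matrix.map_apply]

lemma H2 (a : ℕ) (ha : a + 1 < k) :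
    (tau p k * C.map (frob p) - C * tau p k) ⟨a, by omega⟩ ⟨0, by omega⟩ =
      frob p (C ⟨a + 1, ha⟩ ⟨0, by omega⟩) - C ⟨a, by omega⟩ ⟨k - 1, by omega⟩ * tt p := by
  rw [Matrix.sub_apply, tau_mul_apply_lt p k _ a ha, mul_tau_apply_zero, Matrix.map_apply]

lemma H3 (b : ℕ) (hb : b + 1 < k) :
    (tau p k * C.map (frob p) - C * tau p k) ⟨k - 1, by omega⟩ ⟨b + 1, hb⟩ =
      tt p * frob p (C ⟨0, by omega⟩ ⟨b + 1, hb⟩) - C ⟨k - 1, by omega⟩ ⟨b, by omega⟩ := by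
  rw [Matrix.sub_apply, tau_mul_apply_last p k _ (by omega), mul_tau_apply_pos,
    Matrix.map_apply]

lemma H4 (hk : 0 < k) :
    (tau p k * C.map (frob p) - C * tau p k) ⟨k - 1, by omega⟩ ⟨0, by omega⟩ =
      tt p * frob p (C ⟨0, by omega⟩ ⟨0, by omega⟩)
        - C ⟨k - 1, by omega⟩ ⟨k - 1, by omega⟩ * tt p := by
  rw [Matrix.sub_apply, tau_mul_apply_last p k _ hk, mul_tau_apply_zero, Matrix.map_apply]

variable {p k}

/-- first S condition -/
def SC1 (C : Matrix (Fin k) (Fin k) (Lp p)) : Prop :=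
  ∀ i j, (tau p k * C.map (frob p) - C * tau p k) i j ∈ OL p

/-- second S condition -/
def SC2 (hk : 0 < k) (C : Matrix (Fin k) (Fin k) (Lp p)) : Prop :=
  ∀ i : ℤ, i < 1 →
    ((tau p k * C.map (frob p) - C * tau p k) ⟨k - 1, by omega⟩ ⟨0, by omega⟩).coeff i = 0

lemma rel1 (hC : SC1 C) (a b : ℕ) (ha : a + 1 < k) (hb : b + 1 < k)
    (m : ℤ) (hm : m < 0) :
    ((C ⟨a + 1, ha⟩ ⟨b + 1, hb⟩).coeff m) ^ p = (C ⟨a, by omega⟩ ⟨b, by omega⟩).coeff m := by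
  have h := hC ⟨a, by omega⟩ ⟨b + 1, hb⟩
  rw [H1 p k a b ha hb] at h
  have h2 := h m hm
  rw [HahnSeries.coeff_sub, frob_coeff, sub_eq_zero] at h2
  exact h2

lemma rel2 (hC : SC1 C) (a : ℕ) (ha : a + 1 < k) (m : ℤ) (hm : m < 0) :
    ((C ⟨a + 1, ha⟩ ⟨0, by omega⟩).coeff m) ^ p
      = (C ⟨a, by omega⟩ ⟨k - 1, by omega⟩).coeff (m - 1) := by
  have h := hC ⟨a, by omega⟩ ⟨0, by omega⟩
  rw [H2 p k a ha] at h
  have h2 := h m hm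
  rw [HahnSeries.coeff_sub, frob_coeff, mul_tt_coeff, sub_eq_zero] at h2
  exact h2

lemma rel3 (hC : SC1 C) (b : ℕ) (hb : b + 1 < k) (m : ℤ) (hm : m < 0) :
    ((C ⟨0, by omega⟩ ⟨b + 1, hb⟩).coeff (m - 1)) ^ p
      = (C ⟨k - 1, by omega⟩ ⟨b, by omega⟩).coeff m := by
  have h := hC ⟨k - 1, by omega⟩ ⟨b + 1, hb⟩
  rw [H3 p k b hb] at h
  have h2 := h m hm
  rw [HahnSeries.coeff_sub, tt_mul_coeff, frob_coeff, sub_eq_zero] at h2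
  exact h2

lemma rel4 (hk : 0 < k) (hC : SC2 hk C) (m : ℤ) (hm : m < 1) :
    ((C ⟨0, by omega⟩ ⟨0, by omega⟩).coeff (m - 1)) ^ p
      = (C ⟨k - 1, by omega⟩ ⟨k - 1, by omega⟩).coeff (m - 1) := by
  have h2 := hC m hm
  rw [H4 p k hk] at h2
  rw [HahnSeries.coeff_sub, tt_mul_coeff, mul_tt_coeff, frob_coeff, sub_eq_zero] at h2
  exact h2



lemma below (hC : SC1 C) :
    ∀ (s a b : ℕ) (_ : b ≤ a) (hsk : a + s + 1 = k) (m : ℤ), m < 0 →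
      (C ⟨a, by omega⟩ ⟨b, by omega⟩).coeff m
        = ((C ⟨k - 1, by omega⟩ ⟨b + s, by omega⟩).coeff m) ^ (p ^ s) := by
  intro s
  induction s with
  | zero =>
    intro a b hab hsk m hm
    have ha : a = k - 1 := by omega
    rw [fin_cast (by omega) (by omega) ha, fin_cast (x := b + 0) (by omega) (by omega)
      (by omega : b + 0 = b), pow_zero, pow_one]
  | succ s ih =>
    intro a b hab hsk m hm
    have ha1 : a + 1 < k := by omega
    have h1 := rel1 hC a b ha1 (by omega) m hm
    rw [← h1, ih (a + 1) (b + 1) (by omega) (by omega) m hm]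
    rw [fin_cast (x := b + 1 + s) (by omega) (by omega) (by omega : b + 1 + s = b + (s + 1)),
      ← pow_mul, ← pow_succ]

lemma above (hC : SC1 C) :
    ∀ (s a b : ℕ) (_ : a < b) (hsk : b + s + 1 = k) (m : ℤ), m < -1 →
      (C ⟨a, by omega⟩ ⟨b, by omega⟩).coeff m
        = ((C ⟨k - 1, by omega⟩ ⟨b - a - 1, by omega⟩).coeff (m + 1)) ^ (p ^ (k - 1 - a)) := by
  intro s
  induction s with
  | zero =>
    intro a b hab hsk m hm
    have hb : b = k - 1 := by omega
    subst hb
    -- wrap: rel2 at a, coefficient m+1 < 0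
    have ha1 : a + 1 < k := by omega
    have h2 := rel2 hC a ha1 (m + 1) (by omega)
    -- h2 : (C ⟨a+1⟩ ⟨0⟩).coeff (m+1) ^ p = (C ⟨a⟩ ⟨k-1⟩).coeff (m+1-1)
    have hmm : m + 1 - 1 = m := by ring
    rw [hmm] at h2
    rw [← h2]
    -- below at (a+1, 0), s' = k - a - 2
    have hbel := below hC (k - a - 2) (a + 1) 0 (by omega) (by omega) (m + 1) (by omega)
    rw [hbel]
    rw [fin_cast (x := 0 + (k - a - 2)) (by omega) (by omega)
      (by omega : 0 + (k - a - 2) = k - 1 - a - 1)]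
    rw [← pow_mul, ← pow_succ, show k - a - 2 + 1 = k - 1 - a from by omega]
  | succ s ih =>
    intro a b hab hsk m hm
    have ha1 : a + 1 < k := by omega
    have hb1 : b + 1 < k := by omega
    have h1 := rel1 hC a b ha1 hb1 m (by omega)
    rw [← h1, ih (a + 1) (b + 1) (by omega) (by omega) m hm]
    rw [fin_cast (x := b + 1 - (a + 1) - 1) (by omega) (by omega)
      (by omega : b + 1 - (a + 1) - 1 = b - a - 1)]
    rw [← pow_mul, ← pow_succ, show k - 1 - (a + 1) + 1 = k - 1 - a from by omega]

/-- σ^k-invariance of principal coefficients of the bottom row -/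
lemma binv (hk : 0 < k) (hC : SC1 C) (hC2 : SC2 hk C) (b : ℕ) (hb : b < k)
    (m : ℤ) (hm : m < 0) :
    ((C ⟨k - 1, by omega⟩ ⟨b, hb⟩).coeff m) ^ (p ^ k) = (C ⟨k - 1, by omega⟩ ⟨b, hb⟩).coeff m := by
  rcases Nat.lt_or_ge b (k - 1) with hbk | hbk
  · -- b < k-1, use rel3 and above
    have hb1 : b + 1 < k := by omega
    have h3 := rel3 hC b hb1 m hm
    have hab := above hC (k - b - 2) 0 (b + 1) (by omega) (by omega) (m - 1) (by omega)
    rw [show m - 1 + 1 = m by ring] at hab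
    rw [fin_cast (x := b + 1 - 0 - 1) (by omega) (by omega) (by omega : b + 1 - 0 - 1 = b)]
      at hab
    rw [hab] at h3
    have he : (p : ℕ) ^ k = (p ^ (k - 1 - 0)) * p := by
      rw [← pow_succ]
      congr 1
      omega
    rw [he, pow_mul]
    exact h3
  · have hb' : b = k - 1 := by omega
    subst hb'
    have h4 := rel4 hk hC2 (m + 1) (by omega)
    rw [show m + 1 - 1 = m by ring] at h4
    have hbel := below hC (k - 1) 0 0 (by omega) (by omega) m hm
    rw [fin_cast (x := 0 + (k - 1)) (by omega) (by omega) (by omega : 0 + (k - 1) = k - 1)]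
      at hbel
    rw [hbel] at h4
    have he : (p : ℕ) ^ k = (p ^ (k - 1)) * p := by
      rw [← pow_succ]
      congr 1
      omega
    rw [he, pow_mul]
    exact h4



lemma Hadd (C C' : Matrix (Fin k) (Fin k) (Lp p)) (i j : Fin k) :
    (tau p k * (C + C').map (frob p) - (C + C') * tau p k) i j
      = (tau p k * C.map (frob p) - C * tau p k) i j
        + (tau p k * C'.map (frob p) - C' * tau p k) i j := by
  have hm : (C + C').map (frob p) = C.map (frob p) + C'.map (frob p) := by
    ext a b
    simp [Matrix.map_apply, Matrix.add_apply, frob_add]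
  simp only [hm, mul_add, add_mul, Matrix.sub_apply, Matrix.add_apply]
  ring

lemma Hneg (C : Matrix (Fin k) (Fin k) (Lp p)) (i j : Fin k) :
    (tau p k * (-C).map (frob p) - (-C) * tau p k) i j
      = -((tau p k * C.map (frob p) - C * tau p k) i j) := by
  have hm : (-C).map (frob p) = -(C.map (frob p)) := by
    ext a b
    simp [Matrix.map_apply, Matrix.neg_apply, frob_neg]
  rw [hm, Matrix.sub_apply, Matrix.sub_apply, Matrix.mul_neg, Matrix.neg_mul,
    Matrix.neg_apply, Matrix.neg_apply]
  ring

lemma SC1_add {C C' : Matrix (Fin k) (Fin k) (Lp p)} (h : SC1 C) (h' : SC1 C') :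
    SC1 (C + C') := fun i j => by
  rw [Hadd]
  exact add_mem (h i j) (h' i j)

lemma SC1_neg {C : Matrix (Fin k) (Fin k) (Lp p)} (h : SC1 C) : SC1 (-C) := fun i j => by
  rw [Hneg]
  exact neg_mem (h i j)

lemma SC2_add (hk : 0 < k) {C C' : Matrix (Fin k) (Fin k) (Lp p)}
    (h : SC2 hk C) (h' : SC2 hk C') : SC2 hk (C + C') := fun m hm => by
  rw [Hadd, HahnSeries.coeff_add, h m hm, h' m hm, add_zero]

lemma SC2_neg (hk : 0 < k) {C : Matrix (Fin k) (Fin k) (Lp p)} (h : SC2 hk C) :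
    SC2 hk (-C) := fun m hm => by
  rw [Hneg, HahnSeries.coeff_neg, h m hm, neg_zero]

lemma SC1_MO {C : Matrix (Fin k) (Fin k) (Lp p)} (h : C ∈ MO p k) : SC1 C := by
  intro i j
  obtain ⟨a, ha⟩ := i
  obtain ⟨b, hb⟩ := j
  have hOL : ∀ (i j : Fin k) (m : ℤ), m < 0 → (C i j).coeff m = 0 := fun i j m hm => h i j m hm
  rcases b with _ | b
  · by_cases hak : a + 1 < k
    · rw [H2 p k a hak]
      intro m hm
      rw [HahnSeries.coeff_sub, frob_coeff, mul_tt_coeff, hOL _ _ m hm, hOL _ _ (m - 1) (by omega),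
        zero_pow (Fact.out : p.Prime).ne_zero, sub_zero]
    · rw [fin_cast ha (by omega) (by omega : a = k - 1), H4 p k (by omega)]
      intro m hm
      rw [HahnSeries.coeff_sub, tt_mul_coeff, frob_coeff, mul_tt_coeff,
        hOL _ _ (m - 1) (by omega), hOL _ _ (m - 1) (by omega),
        zero_pow (Fact.out : p.Prime).ne_zero, sub_zero]
  · by_cases hak : a + 1 < k
    · rw [H1 p k a b hak hb]
      intro m hm
      rw [HahnSeries.coeff_sub, frob_coeff, hOL _ _ m hm, hOL _ _ m hm,
        zero_pow (Fact.out : p.Prime).ne_zero, sub_zero]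
    · rw [fin_cast ha (by omega) (by omega : a = k - 1), H3 p k b hb]
      intro m hm
      rw [HahnSeries.coeff_sub, tt_mul_coeff, frob_coeff, hOL _ _ (m - 1) (by omega),
        hOL _ _ m hm, zero_pow (Fact.out : p.Prime).ne_zero, sub_zero]

lemma SC2_MO (hk : 0 < k) {C : Matrix (Fin k) (Fin k) (Lp p)} (h : C ∈ MO p k) :
    SC2 hk C := by
  intro m hm
  rw [H4 p k hk, HahnSeries.coeff_sub, tt_mul_coeff, mul_tt_coeff, frob_coeff,
    h _ _ (m - 1) (by omega), h _ _ (m - 1) (by omega),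
    zero_pow (Fact.out : p.Prime).ne_zero, sub_zero]

/-- the invariant in `t⁻¹𝒪/𝒪`, for `d` indexing diagonals `1..k-1` -/
def wA (C : Matrix (Fin k) (Fin k) (Lp p)) (d : Fin (k - 1)) : Lp p :=
  C ⟨k - 1 - ((d : ℕ) + 1), by have := d.isLt; omega⟩ ⟨k - 1, by have := d.isLt; omega⟩
    - Tinv p (sg p ((d : ℕ) + 1)
        (Pprin p (C ⟨k - 1, by have := d.isLt; omega⟩ ⟨(d : ℕ), by have := d.isLt; omega⟩)))

/-- the invariant in `𝔽_{p^k}((t))/𝔽_{p^k}[[t]]` -/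
def wB (C : Matrix (Fin k) (Fin k) (Lp p)) (j : Fin k) : Lp p :=
  C ⟨k - 1, by have := j.isLt; omega⟩ j

lemma wA_coeff {C : Matrix (Fin k) (Fin k) (Lp p)} (hC : SC1 C) (d : Fin (k - 1))
    (m : ℤ) (hm : m < -1) : (wA C d).coeff m = 0 := by
  have hd := d.isLt
  have hab := above hC 0 (k - 1 - ((d : ℕ) + 1)) (k - 1) (by omega) (by omega) m hm
  rw [fin_cast (x := k - 1 - (k - 1 - ((d : ℕ) + 1)) - 1) (by omega) (by omega)
    (by omega : k - 1 - (k - 1 - ((d : ℕ) + 1)) - 1 = (d : ℕ)),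
    show k - 1 - (k - 1 - ((d : ℕ) + 1)) = (d : ℕ) + 1 from by omega] at hab
  rw [wA, HahnSeries.coeff_sub, Tinv_coeff, sg_coeff, Pprin_coeff, if_pos (by omega : m + 1 < 0),
    hab, sub_self]

lemma Pprin_eq_of_sub_mem {x x' : Lp p} (h : x - x' ∈ OL p) : Pprin p x = Pprin p x' := by
  ext m
  simp only [Pprin_coeff]
  split_ifs with hm
  · have h2 := h m hm
    rw [HahnSeries.coeff_sub, sub_eq_zero] at h2
    exact h2
  · rfl

lemma wB_sub_mem {C C' : Matrix (Fin k) (Fin k) (Lp p)} (h : C - C' ∈ MO p k) (j : Fin k) :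
    wB C j - wB C' j ∈ OL p := by
  have h2 := h ⟨k - 1, by have := j.isLt; omega⟩ j
  rwa [Matrix.sub_apply] at h2

lemma wA_sub_mem {C C' : Matrix (Fin k) (Fin k) (Lp p)} (h : C - C' ∈ MO p k)
    (d : Fin (k - 1)) : wA C d - wA C' d ∈ OL p := by
  have hd := d.isLt
  have hP : Pprin p (C ⟨k - 1, by omega⟩ ⟨(d : ℕ), by omega⟩)
      = Pprin p (C' ⟨k - 1, by omega⟩ ⟨(d : ℕ), by omega⟩) := by
    refine Pprin_eq_of_sub_mem ?_
    have h2 := h ⟨k - 1, by omega⟩ ⟨(d : ℕ), by omega⟩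
    rwa [Matrix.sub_apply] at h2
  rw [wA, wA, hP]
  have he : C ⟨k - 1 - ((d : ℕ) + 1), by omega⟩ ⟨k - 1, by omega⟩
        - Tinv p (sg p ((d : ℕ) + 1) (Pprin p (C' ⟨k - 1, by omega⟩ ⟨(d : ℕ), by omega⟩)))
      - (C' ⟨k - 1 - ((d : ℕ) + 1), by omega⟩ ⟨k - 1, by omega⟩
        - Tinv p (sg p ((d : ℕ) + 1) (Pprin p (C' ⟨k - 1, by omega⟩ ⟨(d : ℕ), by omega⟩))))
      = C ⟨k - 1 - ((d : ℕ) + 1), by omega⟩ ⟨k - 1, by omega⟩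
        - C' ⟨k - 1 - ((d : ℕ) + 1), by omega⟩ ⟨k - 1, by omega⟩ := by ring
  rw [he]
  have h2 := h ⟨k - 1 - ((d : ℕ) + 1), by omega⟩ ⟨k - 1, by omega⟩
  rwa [Matrix.sub_apply] at h2



lemma inj_core (hk : 0 < k) {C C' : Matrix (Fin k) (Fin k) (Lp p)}
    (hC : SC1 C) (hC' : SC1 C')
    (hbot : ∀ (b : ℕ) (hb : b < k) (m : ℤ), m < 0 →
      (C ⟨k - 1, by omega⟩ ⟨b, hb⟩).coeff m = (C' ⟨k - 1, by omega⟩ ⟨b, hb⟩).coeff m)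
    (hcol : ∀ (a : ℕ) (_ : a < k - 1) (m : ℤ), m < 0 →
      (C ⟨a, by omega⟩ ⟨k - 1, by omega⟩).coeff m
        = (C' ⟨a, by omega⟩ ⟨k - 1, by omega⟩).coeff m) :
    C - C' ∈ MO p k := by
  have main : ∀ (s a b : ℕ) (ha : a < k) (hb : b < k), k - 1 - a ≤ s →
      ∀ m : ℤ, m < 0 → (C ⟨a, ha⟩ ⟨b, hb⟩).coeff m = (C' ⟨a, ha⟩ ⟨b, hb⟩).coeff m := by
    intro s
    induction s with
    | zero =>
      intro a b ha hb hs m hm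
      rw [fin_cast ha (by omega) (by omega : a = k - 1)]
      exact hbot b hb m hm
    | succ s ih =>
      intro a b ha hb hs m hm
      rcases Nat.lt_or_ge a (k - 1) with h1 | h1
      · rcases Nat.lt_or_ge b (k - 1) with h2 | h2
        · have r := rel1 hC a b (by omega) (by omega) m hm
          have r' := rel1 hC' a b (by omega) (by omega) m hm
          rw [← r, ← r', ih (a + 1) (b + 1) (by omega) (by omega) (by omega) m hm]
        · rw [fin_cast hb (by omega) (by omega : b = k - 1)]
          exact hcol a h1 m hm
      · rw [fin_cast ha (by omega) (by omega : a = k - 1)]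
        exact hbot b hb m hm
  intro i j
  obtain ⟨a, ha⟩ := i
  obtain ⟨b, hb⟩ := j
  intro m hm
  rw [Matrix.sub_apply, HahnSeries.coeff_sub, main k a b ha hb (by omega) m hm, sub_self]



lemma sg_zero (c : Lp p) : sg p 0 c = c := by
  ext m
  simp [sg_coeff]

variable (p k) in
/-- The explicit representative matrix built from parameters. -/
def Cc (yy : Fin k → Lp p) (aa : Fin (k - 1) → Kb p) : Matrix (Fin k) (Fin k) (Lp p) :=
  Matrix.of fun i j =>
    if h : (j : ℕ) ≤ (i : ℕ) then
      sg p (k - 1 - (i : ℕ))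
        (yy ⟨(j : ℕ) + (k - 1 - (i : ℕ)), by have := i.isLt; have := j.isLt; omega⟩)
    else
      Tinv p (sg p (k - 1 - (i : ℕ)) (yy ⟨(j : ℕ) - (i : ℕ) - 1, by have := j.isLt; omega⟩))
        + sg p (k - 1 - (j : ℕ))
            (HahnSeries.single (-1 : ℤ)
              (aa ⟨(j : ℕ) - (i : ℕ) - 1, by have := i.isLt; have := j.isLt; omega⟩))

variable {yy : Fin k → Lp p} {aa : Fin (k - 1) → Kb p}

lemma Cc_below (a b : ℕ) (ha : a < k) (hb : b ≤ a) :
    Cc p k yy aa ⟨a, ha⟩ ⟨b, by omega⟩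
      = sg p (k - 1 - a) (yy ⟨b + (k - 1 - a), by omega⟩) := by
  simp only [Cc, Matrix.of_apply, Fin.val_mk]
  rw [dif_pos hb]

lemma Cc_above (a b : ℕ) (hb : b < k) (hab : a < b) :
    Cc p k yy aa ⟨a, by omega⟩ ⟨b, hb⟩
      = Tinv p (sg p (k - 1 - a) (yy ⟨b - a - 1, by omega⟩))
        + sg p (k - 1 - b)
            (HahnSeries.single (-1 : ℤ) (aa ⟨b - a - 1, by omega⟩)) := by
  simp only [Cc, Matrix.of_apply, Fin.val_mk]
  rw [dif_neg (by omega)]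



section Verify

variable (hy0 : ∀ (j : Fin k) (m : ℤ), 0 ≤ m → (yy j).coeff m = 0)
variable (hfix : ∀ (j : Fin k) (m : ℤ), ((yy j).coeff m) ^ (p ^ k) = (yy j).coeff m)

lemma pne : (p : ℕ) ≠ 0 := (Fact.out : p.Prime).ne_zero

include hfix in
lemma Cc_H4 (hk : 0 < k) (m : ℤ) :
    (tt p * frob p (Cc p k yy aa ⟨0, by omega⟩ ⟨0, by omega⟩)
      - Cc p k yy aa ⟨k - 1, by omega⟩ ⟨k - 1, by omega⟩ * tt p).coeff m = 0 := by
  rw [Cc_below 0 0 (by omega) le_rfl, Cc_below (k - 1) (k - 1) (by omega) le_rfl]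
  rw [HahnSeries.coeff_sub, tt_mul_coeff, frob_coeff, mul_tt_coeff, sg_coeff, sg_coeff]
  rw [fin_cast (x := 0 + (k - 1 - 0)) (by omega) (by omega)
      (by omega : 0 + (k - 1 - 0) = k - 1),
    fin_cast (x := k - 1 + (k - 1 - (k - 1))) (by omega) (by omega)
      (by omega : k - 1 + (k - 1 - (k - 1)) = k - 1)]
  rw [← pow_mul, ← pow_succ, show k - 1 - 0 + 1 = k from by omega,
    show k - 1 - (k - 1) = 0 from by omega, pow_zero, pow_one, hfix, sub_self]

include hfix in
lemma Cc_SC1 (hk : 0 < k) : SC1 (Cc p k yy aa) := by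
  intro i j
  obtain ⟨a, ha⟩ := i
  obtain ⟨b, hb⟩ := j
  rcases b with _ | b
  · by_cases hak : a + 1 < k
    · rw [H2 p k a hak, Cc_below (a + 1) 0 hak (by omega),
        Cc_above a (k - 1) (by omega) (by omega)]
      intro m hm
      rw [HahnSeries.coeff_sub, frob_coeff, mul_tt_coeff, HahnSeries.coeff_add, Tinv_coeff,
        sg_coeff, sg_coeff, sg_coeff, HahnSeries.coeff_single]
      rw [if_neg (by omega : ¬ (m - 1 = -1)), zero_pow (pow_ne_zero _ ((Fact.out : p.Prime).ne_zero)), add_zero,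
        show m - 1 + 1 = m from by ring,
        fin_cast (x := 0 + (k - 1 - (a + 1))) (by omega) (by omega)
          (by omega : 0 + (k - 1 - (a + 1)) = k - 1 - a - 1)]
      rw [← pow_mul, ← pow_succ, show k - 1 - (a + 1) + 1 = k - 1 - a from by omega, sub_self]
    · rw [fin_cast ha (by omega) (by omega : a = k - 1), H4 p k (by omega)]
      intro m _
      exact Cc_H4 hfix (by omega) m
  · by_cases hak : a + 1 < k
    · rw [H1 p k a b hak hb]
      rcases Nat.lt_or_ge a b with hba | hba
      · -- above diagonal
        rw [Cc_above (a + 1) (b + 1) hb (by omega), Cc_above a b (by omega) hba]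
        intro m _
        rw [HahnSeries.coeff_sub, frob_coeff, HahnSeries.coeff_add, HahnSeries.coeff_add,
          Tinv_coeff, Tinv_coeff, sg_coeff, sg_coeff, sg_coeff, sg_coeff,
          HahnSeries.coeff_single, HahnSeries.coeff_single]
        rw [add_pow_char]
        rw [fin_cast (x := b + 1 - (a + 1) - 1) (by omega) (by omega)
            (by omega : b + 1 - (a + 1) - 1 = b - a - 1),
          fin_cast (k := k - 1) (x := b + 1 - (a + 1) - 1) (by omega) (by omega)
            (by omega : b + 1 - (a + 1) - 1 = b - a - 1)]
        rw [← pow_mul, ← pow_mul, ← pow_succ, ← pow_succ,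
          show k - 1 - (a + 1) + 1 = k - 1 - a from by omega,
          show k - 1 - (b + 1) + 1 = k - 1 - b from by omega, sub_self]
      · -- below diagonal
        rw [Cc_below (a + 1) (b + 1) hak (by omega), Cc_below a b (by omega) (by omega)]
        intro m _
        rw [HahnSeries.coeff_sub, frob_coeff, sg_coeff, sg_coeff,
          fin_cast (x := b + 1 + (k - 1 - (a + 1))) (by omega) (by omega)
            (by omega : b + 1 + (k - 1 - (a + 1)) = b + (k - 1 - a))]
        rw [← pow_mul, ← pow_succ, show k - 1 - (a + 1) + 1 = k - 1 - a from by omega, sub_self]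
    · rw [fin_cast ha (by omega) (by omega : a = k - 1), H3 p k b hb,
        Cc_above 0 (b + 1) hb (by omega), Cc_below (k - 1) b (by omega) (by omega)]
      intro m hm
      rw [HahnSeries.coeff_sub, tt_mul_coeff, frob_coeff, HahnSeries.coeff_add, Tinv_coeff,
        sg_coeff, sg_coeff, sg_coeff, HahnSeries.coeff_single]
      rw [if_neg (by omega : ¬ (m - 1 = -1)), zero_pow (pow_ne_zero _ ((Fact.out : p.Prime).ne_zero)), add_zero,
        show m - 1 + 1 = m from by ring,
        fin_cast (x := b + 1 - 0 - 1) (by omega) (by omega) (by omega : b + 1 - 0 - 1 = b),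
        fin_cast (x := b + (k - 1 - (k - 1))) (by omega) (by omega)
          (by omega : b + (k - 1 - (k - 1)) = b)]
      rw [← pow_mul, ← pow_succ, show k - 1 - 0 + 1 = k from by omega, hfix,
        show k - 1 - (k - 1) = 0 from by omega, pow_zero, pow_one, sub_self]

include hfix in
lemma Cc_SC2 (hk : 0 < k) : SC2 hk (Cc p k yy aa) := by
  intro m _
  rw [H4 p k hk]
  exact Cc_H4 hfix hk m

end Verify



lemma wB_Cc (j : Fin k) : wB (Cc p k yy aa) j = yy j := by
  obtain ⟨b, hb⟩ := j
  show Cc p k yy aa ⟨k - 1, by omega⟩ ⟨b, hb⟩ = yy ⟨b, hb⟩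
  rw [Cc_below (k - 1) b (by omega) (by omega),
    fin_cast (x := b + (k - 1 - (k - 1))) (by omega) (by omega)
      (by omega : b + (k - 1 - (k - 1)) = b),
    show k - 1 - (k - 1) = 0 from by omega, sg_zero]

lemma Pprin_idem (c : Lp p) : Pprin p (Pprin p c) = Pprin p c := by
  ext m
  simp only [Pprin_coeff]
  split_ifs <;> rfl

lemma wA_Cc (hyP : ∀ j, Pprin p (yy j) = yy j) (d : Fin (k - 1)) :
    wA (Cc p k yy aa) d = HahnSeries.single (-1 : ℤ) (aa d) := by
  have hd := d.isLt
  show Cc p k yy aa ⟨k - 1 - ((d : ℕ) + 1), by omega⟩ ⟨k - 1, by omega⟩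
      - Tinv p (sg p ((d : ℕ) + 1)
          (Pprin p (Cc p k yy aa ⟨k - 1, by omega⟩ ⟨(d : ℕ), by omega⟩))) = _
  rw [Cc_below (k - 1) (d : ℕ) (by omega) (by omega),
    fin_cast (x := (d : ℕ) + (k - 1 - (k - 1))) (by omega) (by omega)
      (by omega : (d : ℕ) + (k - 1 - (k - 1)) = (d : ℕ)),
    show k - 1 - (k - 1) = 0 from by omega, sg_zero, hyP,
    Cc_above (k - 1 - ((d : ℕ) + 1)) (k - 1) (by omega) (by omega),
    fin_cast (x := k - 1 - (k - 1 - ((d : ℕ) + 1)) - 1) (by omega) (by omega)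
      (by omega : k - 1 - (k - 1 - ((d : ℕ) + 1)) - 1 = (d : ℕ)),
    fin_cast (k := k - 1) (x := k - 1 - (k - 1 - ((d : ℕ) + 1)) - 1) (by omega) (by omega)
      (by omega : k - 1 - (k - 1 - ((d : ℕ) + 1)) - 1 = (d : ℕ)),
    show k - 1 - (k - 1 - ((d : ℕ) + 1)) = (d : ℕ) + 1 from by omega,
    show k - 1 - (k - 1) = 0 from by omega, sg_zero, Fin.eta]
  exact add_sub_cancel_left _ _

lemma sub_mem_of_mk_eq {G : Type*} [AddCommGroup G] {H : AddSubgroup G} {a b : G}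
    (h : (QuotientAddGroup.mk a : G ⧸ H) = QuotientAddGroup.mk b) : a - b ∈ H := by
  have h2 := QuotientAddGroup.eq.mp h
  have he : a - b = -(-a + b) := by abel
  rw [he]
  exact neg_mem h2

lemma mk_eq_of_sub_mem {G : Type*} [AddCommGroup G] {H : AddSubgroup G} {a b : G}
    (h : a - b ∈ H) : (QuotientAddGroup.mk a : G ⧸ H) = QuotientAddGroup.mk b := by
  rw [QuotientAddGroup.eq]
  have he : -a + b = -(a - b) := by abel
  rw [he]
  exact neg_mem h

lemma mk_Pprin (c : Lp p) :
    (QuotientAddGroup.mk (Pprin p c) : Lp p ⧸ OL p) = QuotientAddGroup.mk c := by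
  rw [QuotientAddGroup.eq]
  intro m hm
  rw [HahnSeries.coeff_add, HahnSeries.coeff_neg, Pprin_coeff, if_pos hm, neg_add_cancel]

lemma mk_single_eq {c : Lp p} (hc : ∀ i : ℤ, i < -1 → c.coeff i = 0) :
    (QuotientAddGroup.mk (HahnSeries.single (-1 : ℤ) (c.coeff (-1))) : Lp p ⧸ OL p)
      = QuotientAddGroup.mk c := by
  rw [QuotientAddGroup.eq]
  intro m hm
  rw [HahnSeries.coeff_add, HahnSeries.coeff_neg, HahnSeries.coeff_single]
  rcases eq_or_ne m (-1) with h | h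
  · subst h
    simp
  · rw [if_neg h, hc m (by omega), neg_zero, zero_add]

lemma wB_binv (hk : 0 < k) {C : Matrix (Fin k) (Fin k) (Lp p)} (h1 : SC1 C) (h2 : SC2 hk C)
    (j : Fin k) (m : ℤ) :
    ((Pprin p (wB C j)).coeff m) ^ (p ^ k) = (Pprin p (wB C j)).coeff m := by
  rw [Pprin_coeff]
  split_ifs with h
  · obtain ⟨b, hb⟩ := j
    exact binv hk h1 h2 b hb m h
  · exact zero_pow (pow_ne_zero _ (Fact.out : p.Prime).ne_zero)

lemma hcol_of {C C' : Matrix (Fin k) (Fin k) (Lp p)}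
    (hA : ∀ d : Fin (k - 1), wA C d - wA C' d ∈ OL p)
    (hB : ∀ j : Fin k, wB C j - wB C' j ∈ OL p) :
    ∀ (a : ℕ) (_ : a < k - 1) (m : ℤ), m < 0 →
      (C ⟨a, by omega⟩ ⟨k - 1, by omega⟩).coeff m
        = (C' ⟨a, by omega⟩ ⟨k - 1, by omega⟩).coeff m := by
  intro a ha m hm
  have h2 := hA ⟨k - 2 - a, by omega⟩
  simp only [wA, Fin.val_mk] at h2
  have hP : Pprin p (C ⟨k - 1, by omega⟩ ⟨k - 2 - a, by omega⟩)
      = Pprin p (C' ⟨k - 1, by omega⟩ ⟨k - 2 - a, by omega⟩) :=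
    Pprin_eq_of_sub_mem (hB ⟨k - 2 - a, by omega⟩)
  rw [hP] at h2
  have he : C ⟨k - 1 - (k - 2 - a + 1), by omega⟩ ⟨k - 1, by omega⟩
        - Tinv p (sg p (k - 2 - a + 1)
            (Pprin p (C' ⟨k - 1, by omega⟩ ⟨k - 2 - a, by omega⟩)))
      - (C' ⟨k - 1 - (k - 2 - a + 1), by omega⟩ ⟨k - 1, by omega⟩
        - Tinv p (sg p (k - 2 - a + 1)
            (Pprin p (C' ⟨k - 1, by omega⟩ ⟨k - 2 - a, by omega⟩))))
      = C ⟨k - 1 - (k - 2 - a + 1), by omega⟩ ⟨k - 1, by omega⟩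
        - C' ⟨k - 1 - (k - 2 - a + 1), by omega⟩ ⟨k - 1, by omega⟩ := by ring
  rw [he] at h2
  rw [fin_cast (x := k - 1 - (k - 2 - a + 1)) (by omega) (by omega)
    (by omega : k - 1 - (k - 2 - a + 1) = a)] at h2
  have h3 := h2 m hm
  rw [HahnSeries.coeff_sub, sub_eq_zero] at h3
  exact h3

end Stmt9Aux

open Stmt9Aux in
/-- The equal-block Drinfeld case: for
`S = {C ∈ M_{k×k}(L) : h(C) = τ_k σ(C) − C τ_k has its (k,1) entry in t𝒪_L and all
entries in 𝒪_L}`, `S` is an additive subgroup of `M_{k×k}(L)` containing `M_{k×k}(𝒪_L)`,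
and `S / M_{k×k}(𝒪_L)` is in bijection with
`(t⁻¹𝒪_L/𝒪_L)^{k−1} × (𝔽_{p^k}((t))/𝔽_{p^k}[[t]])^k`, where `𝔽_{p^k} = {a : a^{p^k} = a}`.
(The quotient `𝔽_{p^k}((t))/𝔽_{p^k}[[t]]` is realized as the image of `𝔽_{p^k}((t))` in
`L/𝒪_L`.) -/
theorem stmt_9 (p : ℕ) [Fact p.Prime] (k : ℕ) (hk : 1 ≤ k)
    (S : Set (Matrix (Fin k) (Fin k) (Lp p)))
    (hS : S = {C |
      (∀ i j, (tau p k * C.map (frob p) - C * tau p k) i j ∈ OL p) ∧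
      (∀ i : ℤ, i < 1 →
        ((tau p k * C.map (frob p) - C * tau p k)
          (⟨k - 1, by omega⟩ : Fin k) (⟨0, by omega⟩ : Fin k)).coeff i = 0)}) :
    -- `S` is an additive subgroup of `M_{k×k}(L)` containing `M_{k×k}(𝒪_L)`
    (0 ∈ S) ∧
    (∀ C₁ ∈ S, ∀ C₂ ∈ S, C₁ + C₂ ∈ S) ∧
    (∀ C ∈ S, -C ∈ S) ∧
    (∀ C, C ∈ MO p k → C ∈ S) ∧
    -- the bijection of sets `S / M_{k×k}(𝒪_L) ≃ (t⁻¹𝒪_L/𝒪_L)^{k−1} × (𝔽_{p^k}((t))/𝔽_{p^k}[[t]])^k`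
    Nonempty (
      {x : Matrix (Fin k) (Fin k) (Lp p) ⧸ MO p k // ∃ C ∈ S, QuotientAddGroup.mk C = x} ≃
      ((Fin (k - 1) →
          {x : Lp p ⧸ OL p // ∃ c : Lp p, (∀ i : ℤ, i < -1 → c.coeff i = 0) ∧
            QuotientAddGroup.mk c = x}) ×
        (Fin k →
          {x : Lp p ⧸ OL p // ∃ c : Lp p, (∀ i : ℤ, (c.coeff i) ^ (p ^ k) = c.coeff i) ∧
            QuotientAddGroup.mk c = x}))) := by
  have hk0 : 0 < k := hk
  have hSmem : ∀ C : Matrix (Fin k) (Fin k) (Lp p),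
      C ∈ S ↔ SC1 C ∧ SC2 hk0 C := fun C => by rw [hS]; exact Iff.rfl
  refine ⟨?_, ?_, ?_, ?_, ?_⟩
  · exact (hSmem 0).mpr ⟨SC1_MO (zero_mem _), SC2_MO hk0 (zero_mem _)⟩
  · intro C₁ h₁ C₂ h₂
    obtain ⟨h₁a, h₁b⟩ := (hSmem C₁).mp h₁
    obtain ⟨h₂a, h₂b⟩ := (hSmem C₂).mp h₂
    exact (hSmem _).mpr ⟨SC1_add h₁a h₂a, SC2_add hk0 h₁b h₂b⟩
  · intro C hC
    obtain ⟨ha, hb⟩ := (hSmem C).mp hC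
    exact (hSmem _).mpr ⟨SC1_neg ha, SC2_neg hk0 hb⟩
  · intro C hC
    exact (hSmem C).mpr ⟨SC1_MO hC, SC2_MO hk0 hC⟩
  · classical
    refine ⟨Equiv.ofBijective (fun q =>
      (fun d => ⟨QuotientAddGroup.mk (wA q.2.choose d), wA q.2.choose d,
          fun m hm => wA_coeff ((hSmem q.2.choose).mp q.2.choose_spec.1).1 d m hm, rfl⟩,
       fun j => ⟨QuotientAddGroup.mk (wB q.2.choose j), Pprin p (wB q.2.choose j),
          fun m => wB_binv hk0 ((hSmem q.2.choose).mp q.2.choose_spec.1).1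
            ((hSmem q.2.choose).mp q.2.choose_spec.1).2 j m, mk_Pprin _⟩))
      ⟨?_, ?_⟩⟩
    · -- injectivity
      intro q q' h
      have hA : ∀ d : Fin (k - 1), wA q.2.choose d - wA q'.2.choose d ∈ OL p := fun d =>
        sub_mem_of_mk_eq (congrArg (fun z => (z.1 d).1) h)
      have hB : ∀ j : Fin k, wB q.2.choose j - wB q'.2.choose j ∈ OL p := fun j =>
        sub_mem_of_mk_eq (congrArg (fun z => (z.2 j).1) h)
      have hMO : q.2.choose - q'.2.choose ∈ MO p k := by
        apply inj_core hk0 ((hSmem _).mp q.2.choose_spec.1).1 ((hSmem _).mp q'.2.choose_spec.1).1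
        · intro b hb m hm
          have h3 := (hB ⟨b, hb⟩) m hm
          rw [HahnSeries.coeff_sub, sub_eq_zero] at h3
          exact h3
        · exact hcol_of hA hB
      apply Subtype.ext
      rw [← q.2.choose_spec.2, ← q'.2.choose_spec.2]
      exact mk_eq_of_sub_mem hMO
    · -- surjectivity
      rintro ⟨A, B⟩
      set yy : Fin k → Lp p := fun j => Pprin p ((B j).2.choose) with hyy
      set aa : Fin (k - 1) → Kb p := fun d => ((A d).2.choose).coeff (-1) with haa
      have hfix : ∀ (j : Fin k) (m : ℤ),
          ((yy j).coeff m) ^ (p ^ k) = (yy j).coeff m := by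
        intro j m
        simp only [hyy, Pprin_coeff]
        split_ifs with h
        · exact (B j).2.choose_spec.1 m
        · exact zero_pow (pow_ne_zero _ (Fact.out : p.Prime).ne_zero)
      have h1 : SC1 (Cc p k yy aa) := Cc_SC1 hfix hk0
      have h2 : SC2 hk0 (Cc p k yy aa) := Cc_SC2 hfix hk0
      have hq : ∃ C ∈ S, QuotientAddGroup.mk C
          = (QuotientAddGroup.mk (Cc p k yy aa) :
              Matrix (Fin k) (Fin k) (Lp p) ⧸ MO p k) :=
        ⟨Cc p k yy aa, (hSmem _).mpr ⟨h1, h2⟩, rfl⟩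
      refine ⟨⟨QuotientAddGroup.mk (Cc p k yy aa), hq⟩, ?_⟩
      have hMO : hq.choose - Cc p k yy aa ∈ MO p k := sub_mem_of_mk_eq hq.choose_spec.2
      rw [Prod.ext_iff]
      constructor
      · funext d
        apply Subtype.ext
        show QuotientAddGroup.mk (wA hq.choose d) = (A d).1
        rw [mk_eq_of_sub_mem (wA_sub_mem hMO d),
          wA_Cc (fun j => by simp only [hyy]; exact Pprin_idem _)]
        simp only [haa]
        calc (QuotientAddGroup.mk (HahnSeries.single (-1 : ℤ) (((A d).2.choose).coeff (-1)))
              : Lp p ⧸ OL p)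
            = QuotientAddGroup.mk ((A d).2.choose) := mk_single_eq (A d).2.choose_spec.1
          _ = (A d).1 := (A d).2.choose_spec.2
      · funext j
        apply Subtype.ext
        show QuotientAddGroup.mk (wB hq.choose j) = (B j).1
        rw [mk_eq_of_sub_mem (wB_sub_mem hMO j), wB_Cc]
        simp only [hyy]
        calc (QuotientAddGroup.mk (Pprin p ((B j).2.choose)) : Lp p ⧸ OL p)
            = QuotientAddGroup.mk ((B j).2.choose) := mk_Pprin _
          _ = (B j).1 := (B j).2.choose_spec.2
end
end

section
/- Let r ≥ 1, let s be a nonzero integer with gcd(s, r) = 1, define Φ : L^r → L^r by Φ(x_1, …, x_r) = (t^s·σ(x_r), σ(x_1), …, σ(x_{r−1})), and set f = Φ − id and Λ_0 = 𝒪_L^r. Let Λ ⊆ L^r be an 𝒪_L-lattice (an 𝒪_L-submodule of the form P·Λ_0 for some P ∈ GL_r(L)), and let e ∈ ℤ be such that f(t^eΛ_0) ⊆ Λ. Then t^eΛ_0 ⊆ f^{−1}(Λ), f(t^eΛ_0) = t^e·f(Λ_0) is an additive subgroup of Λ, f^{−1}(Λ) is an additive subgroup of L^r, and f induces a bijection (indeed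 an isomorphism of abelian groups) from the quotient f^{−1}(Λ) / t^eΛ_0 onto Λ / f(t^eΛ_0). -/
open Pointwise

section Aux

theorem stmt19_v1 {L : Type*} [Field L] (v : L → ℤ)
    (hv_mul : ∀ x y : L, x ≠ 0 → y ≠ 0 → v (x * y) = v x + v y) : v 1 = 0 := by
  have := hv_mul 1 1 one_ne_zero one_ne_zero
  simp at this; omega

theorem stmt19_vneg {L : Type*} [Field L] (v : L → ℤ)
    (hv_mul : ∀ x y : L, x ≠ 0 → y ≠ 0 → v (x * y) = v x + v y)
    (x : L) (hx : x ≠ 0) : v (-x) = v x := by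
  have h1 : v ((-1 : L) * (-1)) = v (-1) + v (-1) := hv_mul _ _ (by norm_num) (by norm_num)
  simp [stmt19_v1 v hv_mul] at h1
  have h2 : v ((-1 : L) * x) = v (-1) + v x := hv_mul _ _ (by norm_num) hx
  simp at h2; omega

theorem stmt19_vz {L : Type*} [Field L] (v : L → ℤ) (t : L)
    (hv_mul : ∀ x y : L, x ≠ 0 → y ≠ 0 → v (x * y) = v x + v y)
    (ht0 : t ≠ 0) (ht1 : v t = 1) : ∀ k : ℤ, v (t ^ k) = k := by
  have hvinv : v t⁻¹ = -1 := by
    have := hv_mul t t⁻¹ ht0 (inv_ne_zero ht0)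
    rw [mul_inv_cancel₀ ht0, stmt19_v1 v hv_mul] at this; omega
  intro k
  induction k using Int.induction_on with
  | zero => simpa using stmt19_v1 v hv_mul
  | succ k ih =>
      rw [zpow_add_one₀ ht0, hv_mul _ _ (zpow_ne_zero _ ht0) ht0, ih, ht1]
  | pred k ih =>
      rw [zpow_sub_one₀ ht0, hv_mul _ _ (zpow_ne_zero _ ht0) (inv_ne_zero ht0), ih, hvinv]; ring

theorem stmt19_sum {L : Type*} [Field L] (v : L → ℤ)
    (hv_add : ∀ x y : L, x ≠ 0 → y ≠ 0 → x + y ≠ 0 → min (v x) (v y) ≤ v (x + y))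
    (M : ℤ) (F : Finset ℕ) (a : ℕ → L) (h : ∀ n ∈ F, a n = 0 ∨ M ≤ v (a n)) :
    (∑ n ∈ F, a n) = 0 ∨ M ≤ v (∑ n ∈ F, a n) := by
  refine Finset.sum_induction a (fun x => x = 0 ∨ M ≤ v x) ?_ (Or.inl rfl) h
  rintro x y (rfl | hx) hy
  · simpa using hy
  rcases hy with rfl | hy
  · simpa using Or.inr hx
  rcases eq_or_ne x (-y) with rfl | hxy
  · simp
  · right
    rcases eq_or_ne x 0 with rfl | hx0
    · simpa
    rcases eq_or_ne y 0 with rfl | hy0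
    · simpa
    have := hv_add x y hx0 hy0 (fun h => hxy (eq_neg_of_add_eq_zero_left h))
    omega

theorem stmt19_fix {L : Type*} [Field L] (v : L → ℤ) (t : L)
    (hv_mul : ∀ x y : L, x ≠ 0 → y ≠ 0 → v (x * y) = v x + v y)
    (hv_add : ∀ x y : L, x ≠ 0 → y ≠ 0 → x + y ≠ 0 → min (v x) (v y) ≤ v (x + y))
    (ht0 : t ≠ 0) (ht1 : v t = 1)
    (hcomp : ∀ x : ℕ → L,
      (∀ M : ℤ, ∃ N : ℕ, ∀ a ≥ N, ∀ b ≥ N, x a - x b = 0 ∨ M ≤ v (x a - x b)) →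
      ∃ l : L, ∀ M : ℤ, ∃ N : ℕ, ∀ a ≥ N, x a - l = 0 ∨ M ≤ v (x a - l))
    (ρ : L ≃+* L) (hρt : ρ t = t) (hρv : ∀ x : L, x ≠ 0 → v (ρ x) = v x)
    (m : ℤ) (hm : 0 < m) (c : L) : ∃ u : L, u - t ^ m * ρ u = c := by
  rcases eq_or_ne c 0 with rfl | hc
  · exact ⟨0, by simp⟩
  have vz := stmt19_vz v t hv_mul ht0 ht1
  have vneg := stmt19_vneg v hv_mul
  have hρz : ∀ k : ℤ, ρ (t ^ k) = t ^ k := fun k => by rw [map_zpow₀, hρt]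
  -- iterates of ρ
  have hit_ne : ∀ n : ℕ, (⇑ρ)^[n] c ≠ 0 := by
    intro n; induction n with
    | zero => simpa
    | succ n ih => rw [Function.iterate_succ_apply']; simpa using (map_ne_zero ρ).mpr ih
  have hit_v : ∀ n : ℕ, v ((⇑ρ)^[n] c) = v c := by
    intro n; induction n with
    | zero => simp
    | succ n ih => rw [Function.iterate_succ_apply', hρv _ (hit_ne n), ih]
  set a : ℕ → L := fun n => t ^ (m * n) * (⇑ρ)^[n] c with ha
  have ha_ne : ∀ n, a n ≠ 0 := fun n =>
    mul_ne_zero (zpow_ne_zero _ ht0) (hit_ne n)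
  have ha_v : ∀ n : ℕ, v (a n) = m * n + v c := by
    intro n; rw [ha]; rw [hv_mul _ _ (zpow_ne_zero _ ht0) (hit_ne n), vz, hit_v]
  have ha_succ : ∀ n : ℕ, a (n + 1) = t ^ m * ρ (a n) := by
    intro n
    simp only [ha]
    rw [map_mul, hρz, Function.iterate_succ_apply',
      show (m * ((n : ℕ) + 1 : ℕ) : ℤ) = m + m * n by push_cast; ring,
      zpow_add₀ ht0]
    ring
  set x : ℕ → L := fun N => ∑ n ∈ Finset.range N, a n with hx
  have hx_succ : ∀ N : ℕ, x (N + 1) = c + t ^ m * ρ (x N) := by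
    intro N
    rw [hx]
    simp only
    rw [Finset.sum_range_succ']
    simp only [ha_succ]
    rw [← Finset.mul_sum, ← map_sum]
    have : a 0 = c := by simp [ha]
    rw [this]; ring
  -- Cauchy
  have hdiff : ∀ N a' b' : ℕ, N ≤ b' → b' ≤ a' → x a' - x b' = 0 ∨ (N : ℤ) + v c ≤ v (x a' - x b') := by
    intro N a' b' hNb hba
    have : x a' - x b' = ∑ n ∈ Finset.Ico b' a', a n := by
      rw [hx]; simp only; rw [Finset.sum_Ico_eq_sub _ hba]
    rw [this]
    refine stmt19_sum v hv_add _ _ _ ?_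
    intro n hn
    right
    rw [ha_v]
    have hn' : b' ≤ n := (Finset.mem_Ico.mp hn).1
    have h1 : (n : ℤ) ≤ m * n := le_mul_of_one_le_left (Int.ofNat_nonneg n) hm
    have h2 : (N : ℤ) ≤ (n : ℤ) := by exact_mod_cast le_trans hNb hn'
    omega
  have hcauchy : ∀ M : ℤ, ∃ N : ℕ, ∀ a' ≥ N, ∀ b' ≥ N, x a' - x b' = 0 ∨ M ≤ v (x a' - x b') := by
    intro M
    refine ⟨(M - v c).toNat, ?_⟩
    intro a' ha' b' hb'
    have key : ∀ p q : ℕ, (M - v c).toNat ≤ q → q ≤ p → x p - x q = 0 ∨ M ≤ v (x p - x q) := by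
      intro p q h1 h2
      rcases hdiff (M - v c).toNat p q h1 h2 with h | h
      · exact Or.inl h
      · right; have : (M - v c) ≤ ((M - v c).toNat : ℤ) := Int.self_le_toNat _
        omega
    rcases le_total b' a' with h | h
    · exact key a' b' hb' h
    · rcases eq_or_ne (x a' - x b') 0 with hz | hz
      · exact Or.inl hz
      right
      have hz' : x b' - x a' ≠ 0 := fun hzz => hz (by
        have : x a' - x b' = -(x b' - x a') := by ring
        rw [this, hzz]; ring)
      rcases key b' a' ha' h with h0 | h0
      · exact absurd h0 hz'
      · have hrw : x a' - x b' = -(x b' - x a') := by ring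
        rw [hrw, vneg _ hz']
        exact h0
  obtain ⟨l, hl⟩ := hcomp x hcauchy
  refine ⟨l, ?_⟩
  by_contra hw
  set w : L := l - t ^ m * ρ l - c with hwdef
  have hw0 : w ≠ 0 := fun h => hw (by rw [hwdef, sub_eq_zero] at h; exact h)
  obtain ⟨N, hN⟩ := hl (v w + 1)
  have hA := hN (N + 1) (by omega)
  have hB := hN N (le_refl N)
  set A : L := (x (N + 1) - l) * (-1) with hAdef
  set B : L := t ^ m * ρ (x N - l) * (-1) with hBdef
  have hkey : w = A - B := by
    rw [hwdef, hAdef, hBdef, hx_succ N, map_sub]; ring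
  have hterm1 : A = 0 ∨ (A ≠ 0 ∧ v w + 1 ≤ v A) := by
    rcases eq_or_ne (x (N + 1) - l) 0 with hz | hz
    · left; rw [hAdef, hz]; ring
    · right
      have hA0 : A ≠ 0 := by
        rw [hAdef]; exact mul_ne_zero hz (by norm_num)
      refine ⟨hA0, ?_⟩
      rcases hA with h | h
      · exact absurd h hz
      · have : A = -(x (N + 1) - l) := by rw [hAdef]; ring
        rw [this, vneg _ hz]; exact h
  have hterm2 : B = 0 ∨ (B ≠ 0 ∧ v w + 1 ≤ v B) := by
    rcases eq_or_ne (x N - l) 0 with hz | hz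
    · left; rw [hBdef, hz, map_zero]; ring
    · right
      have hρne : ρ (x N - l) ≠ 0 := (map_ne_zero ρ).mpr hz
      have hB0 : B ≠ 0 := by
        rw [hBdef]; exact mul_ne_zero (mul_ne_zero (zpow_ne_zero _ ht0) hρne) (by norm_num)
      refine ⟨hB0, ?_⟩
      rcases hB with h | h
      · exact absurd h hz
      · have : B = -(t ^ m * ρ (x N - l)) := by rw [hBdef]; ring
        rw [this, vneg _ (mul_ne_zero (zpow_ne_zero _ ht0) hρne),
          hv_mul _ _ (zpow_ne_zero _ ht0) hρne, vz, hρv _ hz]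
        omega
  rcases hterm1 with h1 | ⟨h1n, h1v⟩ <;> rcases hterm2 with h2 | ⟨h2n, h2v⟩
  · exact hw0 (by rw [hkey, h1, h2]; ring)
  · have : w = -B := by rw [hkey, h1]; ring
    have : v w = v B := by rw [this, vneg _ h2n]
    omega
  · have : w = A := by rw [hkey, h2]; ring
    have : v w = v A := by rw [this]
    omega
  · have hBn : (-B) ≠ 0 := neg_ne_zero.mpr h2n
    have hsum : A + -B ≠ 0 := by rw [← sub_eq_add_neg, ← hkey]; exact hw0
    have := hv_add A (-B) h1n hBn hsum
    rw [← sub_eq_add_neg, ← hkey] at this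
    rw [vneg _ h2n] at this
    omega

def stmt19_pow {L : Type*} [Field L] (σ : L ≃+* L) : ℕ → (L ≃+* L)
  | 0 => RingEquiv.refl L
  | n + 1 => (stmt19_pow σ n).trans σ


theorem stmt19_pow_apply {L : Type*} [Field L] (σ : L ≃+* L) :
    ∀ (n : ℕ) (z : L), stmt19_pow σ n z = (⇑σ)^[n] z := by
  intro n
  induction n with
  | zero => intro z; rfl
  | succ n ih =>
      intro z
      show σ (stmt19_pow σ n z) = _
      rw [ih, Function.iterate_succ_apply']

theorem stmt19_scalar {L : Type*} [Field L] (v : L → ℤ) (t : L)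
    (hv_mul : ∀ x y : L, x ≠ 0 → y ≠ 0 → v (x * y) = v x + v y)
    (hv_add : ∀ x y : L, x ≠ 0 → y ≠ 0 → x + y ≠ 0 → min (v x) (v y) ≤ v (x + y))
    (ht0 : t ≠ 0) (ht1 : v t = 1)
    (hcomp : ∀ x : ℕ → L,
      (∀ M : ℤ, ∃ N : ℕ, ∀ a ≥ N, ∀ b ≥ N, x a - x b = 0 ∨ M ≤ v (x a - x b)) →
      ∃ l : L, ∀ M : ℤ, ∃ N : ℕ, ∀ a ≥ N, x a - l = 0 ∨ M ≤ v (x a - l))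
    (τ : L ≃+* L) (hτt : τ t = t) (hτv : ∀ x : L, x ≠ 0 → v (τ x) = v x)
    (s : ℤ) (hs : s ≠ 0) (c : L) : ∃ u : L, t ^ s * τ u - u = c := by
  rcases lt_or_gt_of_ne hs with hneg | hpos
  · -- s < 0 : use ρ = τ.symm, m = -s
    have hρt : τ.symm t = t := by
      apply τ.injective; rw [RingEquiv.apply_symm_apply, hτt]
    have hρv : ∀ x : L, x ≠ 0 → v (τ.symm x) = v x := by
      intro x hx
      have hne : τ.symm x ≠ 0 := (map_ne_zero τ.symm).mpr hx
      have := hτv (τ.symm x) hne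
      rw [RingEquiv.apply_symm_apply] at this
      exact this.symm
    obtain ⟨u, hu⟩ := stmt19_fix v t hv_mul hv_add ht0 ht1 hcomp τ.symm hρt hρv (-s)
      (by omega) (t ^ (-s) * τ.symm c)
    refine ⟨u, ?_⟩
    have h2 : τ u - t ^ (-s) * u = t ^ (-s) * c := by
      have := congrArg τ hu
      rwa [map_sub, map_mul, map_mul, map_zpow₀, hτt, RingEquiv.apply_symm_apply,
        RingEquiv.apply_symm_apply] at this
    have hts : t ^ s * t ^ (-s) = 1 := by
      rw [← zpow_add₀ ht0]; simp
    linear_combination t ^ s * h2 + (u + c) * hts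
  · -- s > 0 : use ρ = τ, m = s, constant -c
    obtain ⟨u, hu⟩ := stmt19_fix v t hv_mul hv_add ht0 ht1 hcomp τ hτt hτv s hpos (-c)
    exact ⟨u, by linear_combination -hu⟩

end Aux

/-- Nonzero-slope lattice quotient statement. With
`Φ(x_1,…,x_r) = (t^s σ(x_r), σ(x_1), …, σ(x_{r−1}))`, `f = Φ − id`, `Λ₀ = 𝒪_L^r`, a lattice
`Λ = P·Λ₀` and `e ∈ ℤ` with `f(t^eΛ₀) ⊆ Λ`: one has `t^eΛ₀ ⊆ f⁻¹(Λ)`,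
`f(t^eΛ₀) = t^e·f(Λ₀)` is an additive subgroup of `Λ`, `f⁻¹(Λ)` is an additive subgroup of
`L^r`, and `f` induces a group isomorphism `f⁻¹(Λ)/t^eΛ₀ ≃ Λ/f(t^eΛ₀)`. -/
theorem stmt_19 {L : Type*} [Field L] (v : L → ℤ) (t : L)
    (hv_mul : ∀ x y : L, x ≠ 0 → y ≠ 0 → v (x * y) = v x + v y)
    (hv_add : ∀ x y : L, x ≠ 0 → y ≠ 0 → x + y ≠ 0 → min (v x) (v y) ≤ v (x + y))
    (hv_surj : ∀ n : ℤ, ∃ x : L, x ≠ 0 ∧ v x = n)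
    (ht0 : t ≠ 0) (ht1 : v t = 1)
    (O : Subring L) (hO : ∀ x : L, x ∈ O ↔ x = 0 ∨ 0 ≤ v x)
    -- completeness of `L` for the valuation topology (Cauchy sequences converge)
    (hcomp : ∀ x : ℕ → L,
      (∀ M : ℤ, ∃ N : ℕ, ∀ a ≥ N, ∀ b ≥ N, x a - x b = 0 ∨ M ≤ v (x a - x b)) →
      ∃ l : L, ∀ M : ℤ, ∃ N : ℕ, ∀ a ≥ N, x a - l = 0 ∨ M ≤ v (x a - l))
    (σ : L ≃+* L) (hσt : σ t = t) (hσv : ∀ x : L, x ≠ 0 → v (σ x) = v x)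
    (r : ℕ) (hr : 1 ≤ r) (s : ℤ) (hs : s ≠ 0) (hgcd : Int.gcd s (r : ℤ) = 1)
    (Φ : (Fin r → L) → (Fin r → L))
    (hΦ : ∀ (x : Fin r → L) (i : Fin r), Φ x i =
      if (i : ℕ) = 0 then t ^ s * σ (x (⟨r - 1, by omega⟩ : Fin r))
      else σ (x (⟨(i : ℕ) - 1, by omega⟩ : Fin r)))
    (f : (Fin r → L) → (Fin r → L)) (hf : ∀ x, f x = Φ x - x)
    -- the lattice `Λ = P·Λ₀` for some `P ∈ GL_r(L)`
    (P : Matrix (Fin r) (Fin r) L) (hP : IsUnit P.det)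
    (Λ : Set (Fin r → L))
    (hΛ : Λ = {x | ∃ y : Fin r → L, (∀ i, y i ∈ O) ∧ x = P.mulVec y})
    (e : ℤ)
    (he : ∀ x : Fin r → L, (∀ i, x i ∈ t ^ e • (O : Set L)) → f x ∈ Λ) :
    -- `t^eΛ₀ ⊆ f⁻¹(Λ)`
    ({x : Fin r → L | ∀ i, x i ∈ t ^ e • (O : Set L)} ⊆ f ⁻¹' Λ) ∧
    -- `f(t^eΛ₀) = t^e·f(Λ₀)`
    (f '' {x | ∀ i, x i ∈ t ^ e • (O : Set L)} =
      t ^ e • (f '' {x : Fin r → L | ∀ i, x i ∈ O})) ∧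
    -- `f(t^eΛ₀)` is an additive subgroup of `Λ`
    (f '' {x | ∀ i, x i ∈ t ^ e • (O : Set L)} ⊆ Λ) ∧
    ((0 : Fin r → L) ∈ f '' {x | ∀ i, x i ∈ t ^ e • (O : Set L)}) ∧
    (∀ a ∈ f '' {x | ∀ i, x i ∈ t ^ e • (O : Set L)},
      ∀ b ∈ f '' {x | ∀ i, x i ∈ t ^ e • (O : Set L)},
        a - b ∈ f '' {x | ∀ i, x i ∈ t ^ e • (O : Set L)}) ∧
    -- `f⁻¹(Λ)` is an additive subgroup of `L^r`
    ((0 : Fin r → L) ∈ f ⁻¹' Λ) ∧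
    (∀ a ∈ f ⁻¹' Λ, ∀ b ∈ f ⁻¹' Λ, a - b ∈ f ⁻¹' Λ) ∧
    -- `f` induces a bijection (an isomorphism of abelian groups)
    -- `f⁻¹(Λ)/t^eΛ₀ ≃ Λ/f(t^eΛ₀)`
    (∀ x₁ ∈ f ⁻¹' Λ, ∀ x₂ ∈ f ⁻¹' Λ,
      ((∀ i, (x₁ - x₂) i ∈ t ^ e • (O : Set L)) ↔
        f x₁ - f x₂ ∈ f '' {x | ∀ i, x i ∈ t ^ e • (O : Set L)})) ∧
    (∀ y ∈ Λ, ∃ x ∈ f ⁻¹' Λ, f x = y) := by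
  have vz := stmt19_vz v t hv_mul ht0 ht1
  have hσz : ∀ k : ℤ, σ (t ^ k) = t ^ k := fun k => by rw [map_zpow₀, hσt]
  -- iterate facts
  have hit0 : ∀ n : ℕ, (⇑σ)^[n] (0 : L) = 0 := by
    intro n; induction n with
    | zero => rfl
    | succ n ih => rw [Function.iterate_succ_apply', ih, map_zero]
  have hitne : ∀ (n : ℕ) (z : L), z ≠ 0 → (⇑σ)^[n] z ≠ 0 := by
    intro n z hz; induction n with
    | zero => simpa
    | succ n ih => rw [Function.iterate_succ_apply']; exact (map_ne_zero σ).mpr ih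
  have hitv : ∀ (n : ℕ) (z : L), z ≠ 0 → v ((⇑σ)^[n] z) = v z := by
    intro n z hz; induction n with
    | zero => rfl
    | succ n ih => rw [Function.iterate_succ_apply', hσv _ (hitne n z hz), ih]
  have hstep : ∀ (n : ℕ) (z : L), σ ((⇑σ)^[n] z) = (⇑σ)^[n + 1] z :=
    fun n z => (Function.iterate_succ_apply' (⇑σ) n z).symm
  have hitt : ∀ n : ℕ, (⇑σ)^[n] t = t := by
    intro n; induction n with
    | zero => rfl
    | succ n ih => rw [Function.iterate_succ_apply', ih, hσt]
  -- f is additive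
  have hfsub : ∀ a b, f (a - b) = f a - f b := by
    intro a b; funext i
    simp only [hf, Pi.sub_apply, hΦ]
    split_ifs with h
    · rw [map_sub]; ring
    · rw [map_sub]; ring
  have hf0 : f 0 = 0 := by
    funext i
    simp only [hf, Pi.sub_apply, Pi.zero_apply, hΦ]
    split_ifs with h <;> simp
  -- injectivity of f
  have hinj : ∀ x, f x = 0 → x = 0 := by
    intro x hx0
    have hΦx : ∀ i, Φ x i = x i := by
      intro i
      have h1 : f x i = 0 := by rw [hx0]; rfl
      rw [hf] at h1
      rw [Pi.sub_apply] at h1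
      exact sub_eq_zero.mp h1
    have claim : ∀ k (hk : k < r), x ⟨k, hk⟩ = (⇑σ)^[k] (x ⟨0, by omega⟩) := by
      intro k
      induction k with
      | zero => intro hk; rfl
      | succ k ih =>
          intro hk
          have h1 := hΦx ⟨k + 1, hk⟩
          rw [hΦ] at h1
          simp only [Fin.val_mk, Nat.add_sub_cancel] at h1
          rw [if_neg (Nat.succ_ne_zero k)] at h1
          rw [← h1, ih (by omega)]
          exact hstep k _
    have h0 := hΦx ⟨0, by omega⟩
    rw [hΦ, if_pos rfl, claim (r - 1) (by omega), hstep (r - 1),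
      show r - 1 + 1 = r by omega] at h0
    by_cases hx00 : x ⟨0, by omega⟩ = 0
    · funext i
      have h2 := claim i.1 i.2
      rw [Fin.eta] at h2
      rw [h2, hx00, hit0]
      rfl
    · exfalso
      have h3 := hv_mul (t ^ s) ((⇑σ)^[r] (x ⟨0, by omega⟩)) (zpow_ne_zero _ ht0)
        (hitne r _ hx00)
      rw [h0, vz, hitv r _ hx00] at h3
      omega
  -- surjectivity of f
  have hsurj : ∀ y : Fin r → L, ∃ x, f x = y := by
    intro y
    set E : ℕ → L := fun k => Nat.rec (0 : L)
      (fun k ih => σ ih + (if h : k + 1 < r then y ⟨k + 1, h⟩ else 0)) k with hE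
    have hE0 : E 0 = 0 := rfl
    have hEs : ∀ k, E (k + 1) = σ (E k) + (if h : k + 1 < r then y ⟨k + 1, h⟩ else 0) :=
      fun k => rfl
    have hτt : stmt19_pow σ r t = t := by rw [stmt19_pow_apply, hitt]
    have hτv : ∀ z : L, z ≠ 0 → v (stmt19_pow σ r z) = v z := by
      intro z hz; rw [stmt19_pow_apply]; exact hitv r z hz
    obtain ⟨u, hu⟩ := stmt19_scalar v t hv_mul hv_add ht0 ht1 hcomp (stmt19_pow σ r)
      hτt hτv s hs (y ⟨0, by omega⟩ + t ^ s * σ (E (r - 1)))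
    rw [stmt19_pow_apply] at hu
    refine ⟨fun i => (⇑σ)^[i.1] u - E i.1, ?_⟩
    funext i
    rw [hf, Pi.sub_apply, hΦ]
    by_cases h : (i : ℕ) = 0
    · rw [if_pos h]
      simp only
      rw [map_sub, hstep (r - 1), show r - 1 + 1 = r by omega]
      have hi : i = ⟨0, by omega⟩ := Fin.ext h
      rw [hi]
      simp only [Function.iterate_zero_apply]
      rw [hE0]
      linear_combination hu
    · rw [if_neg h]
      simp only
      rw [map_sub, hstep ((i : ℕ) - 1), show (i : ℕ) - 1 + 1 = (i : ℕ) by omega]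
      have hEi := hEs ((i : ℕ) - 1)
      rw [show (i : ℕ) - 1 + 1 = (i : ℕ) by omega, dif_pos i.2] at hEi
      rw [hEi, Fin.eta]
      ring
  -- membership helpers
  have hmem : ∀ z : L, z ∈ t ^ e • (O : Set L) ↔ ∃ c ∈ O, z = t ^ e * c := by
    intro z
    rw [Set.mem_smul_set]
    constructor
    · rintro ⟨c, hc, h⟩; exact ⟨c, hc, by rw [← h, smul_eq_mul]⟩
    · rintro ⟨c, hc, h⟩; exact ⟨c, hc, by rw [h, smul_eq_mul]⟩
  have hsubmem : ∀ p q : L, p ∈ t ^ e • (O : Set L) → q ∈ t ^ e • (O : Set L) →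
      p - q ∈ t ^ e • (O : Set L) := by
    intro p q hp hq
    obtain ⟨c, hc, rfl⟩ := (hmem p).mp hp
    obtain ⟨d, hd, rfl⟩ := (hmem q).mp hq
    exact (hmem _).mpr ⟨c - d, sub_mem hc hd, by ring⟩
  have hsmul : ∀ g : Fin r → L, t ^ e • g = fun i => t ^ e * g i := by
    intro g; funext i; rw [Pi.smul_apply, smul_eq_mul]
  have hfsmul : ∀ x : Fin r → L, f (fun i => t ^ e * x i) = fun i => t ^ e * f x i := by
    intro x
    have key : ∀ z : (Fin r → L), ∀ i, f z i = Φ z i - z i := by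
      intro z i; rw [hf]; rfl
    funext i
    rw [key, key, hΦ, hΦ]
    split_ifs with h
    · simp only [map_mul, hσz]; ring
    · simp only [map_mul, hσz]; ring
  -- Λ facts
  have hΛ0 : (0 : Fin r → L) ∈ Λ := by
    rw [hΛ]
    exact ⟨0, fun i => zero_mem O, by rw [Matrix.mulVec_zero]⟩
  have hΛsub : ∀ a ∈ Λ, ∀ b ∈ Λ, a - b ∈ Λ := by
    rw [hΛ]
    rintro a ⟨ya, hya, rfl⟩ b ⟨yb, hyb, rfl⟩
    exact ⟨ya - yb, fun i => sub_mem (hya i) (hyb i), (Matrix.mulVec_sub P ya yb).symm⟩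
  refine ⟨?_, ?_, ?_, ?_, ?_, ?_, ?_, ?_, ?_⟩
  · intro x hx
    exact he x hx
  · ext z
    constructor
    · rintro ⟨x, hx, rfl⟩
      have hc : ∀ i, t ^ (-e) * x i ∈ O := by
        intro i
        obtain ⟨d, hd, hdx⟩ := (hmem (x i)).mp (hx i)
        rw [hdx, ← mul_assoc, ← zpow_add₀ ht0]
        simpa using hd
      refine ⟨f (fun i => t ^ (-e) * x i), ⟨_, hc, rfl⟩, ?_⟩
      have hxc : x = fun i => t ^ e * (t ^ (-e) * x i) := by
        funext i; rw [← mul_assoc, ← zpow_add₀ ht0]; simp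
      conv_rhs => rw [hxc]
      rw [hfsmul]
      exact hsmul _
    · rintro ⟨w, ⟨x, hx, rfl⟩, rfl⟩
      refine ⟨fun i => t ^ e * x i, fun i => (hmem _).mpr ⟨x i, hx i, rfl⟩, ?_⟩
      rw [hfsmul]
      exact (hsmul _).symm
  · rintro z ⟨x, hx, rfl⟩
    exact he x hx
  · exact ⟨0, fun i => (hmem _).mpr ⟨0, zero_mem O, by simp⟩, hf0⟩
  · rintro a ⟨xa, hxa, rfl⟩ b ⟨xb, hxb, rfl⟩
    refine ⟨xa - xb, fun i => ?_, hfsub xa xb⟩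
    rw [Pi.sub_apply]
    exact hsubmem _ _ (hxa i) (hxb i)
  · show f 0 ∈ Λ
    rw [hf0]; exact hΛ0
  · intro a ha b hb
    show f (a - b) ∈ Λ
    rw [hfsub]
    exact hΛsub _ ha _ hb
  · intro x₁ _ x₂ _
    constructor
    · intro h
      exact ⟨x₁ - x₂, h, hfsub x₁ x₂⟩
    · rintro ⟨z, hz, hzeq⟩
      have h1 : f (x₁ - x₂ - z) = 0 := by
        rw [hfsub, hfsub, hzeq]; ring
      have h2 : x₁ - x₂ = z := by
        have := hinj _ h1
        exact sub_eq_zero.mp this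
      intro i
      rw [h2]
      exact hz i
  · intro y hy
    obtain ⟨x, hx⟩ := hsurj y
    refine ⟨x, ?_, hx⟩
    show f x ∈ Λ
    rw [hx]; exact hy
end
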